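/- (Contraction of the other composition order) With the same setup of rank-sparsity incoherence, for every ρ > 0 the composition P_T̄ ∘ P_Ω̄ satisfies ‖P_T̄ ∘ P_Ω̄‖_{ℓ∞→ℓ∞} ≤ α(ρ)β(ρ), where ‖·‖_{ℓ∞→ℓ∞} is the induced operator norm with respect to the entrywise maximum absolute value norm. -/

import Mathlib

open scoped BigOperators
open Matrix
noncomputable section

namespace SLR

/-- Trace inner product `⟨A,B⟩ = tr(AᵀB)`. -/
def inner' {m n : ℕ} (A B : Matrix (Fin m) (Fin n) ℝ) : ℝ := ∑ i, ∑ j, A i j * B i j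

/-- Entrywise 1-norm. -/
def l1 {m n : ℕ} (M : Matrix (Fin m) (Fin n) ℝ) : ℝ := ∑ i, ∑ j, |M i j|

/-- Entrywise ∞-norm (maximum absolute value of an entry). -/
def linf {m n : ℕ} (M : Matrix (Fin m) (Fin n) ℝ) : ℝ := ⨆ i, ⨆ j, |M i j|

/-- Frobenius norm. -/
def frob {m n : ℕ} (M : Matrix (Fin m) (Fin n) ℝ) : ℝ :=
  Real.sqrt (∑ i, ∑ j, (M i j) ^ 2)

/-- `‖M‖_{1→1}`: maximum column absolute sum. -/
def n11 {m n : ℕ} (M : Matrix (Fin m) (Fin n) ℝ) : ℝ := ⨆ j, ∑ i, |M i j|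

/-- `‖M‖_{∞→∞}`: maximum row absolute sum. -/
def nII {m n : ℕ} (M : Matrix (Fin m) (Fin n) ℝ) : ℝ := ⨆ i, ∑ j, |M i j|

/-- Spectral norm `‖M‖_{2→2}`. -/
def spec {m n : ℕ} (M : Matrix (Fin m) (Fin n) ℝ) : ℝ :=
  ‖LinearMap.toContinuousLinearMap (Matrix.toEuclideanLin M)‖

/-- Trace (nuclear) norm: sum of singular values. -/
def traceNorm {m n : ℕ} (M : Matrix (Fin m) (Fin n) ℝ) : ℝ :=
  ∑ i, Real.sqrt ((show (Mᵀ * M).IsHermitian by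
    simpa [Matrix.conjTranspose_eq_transpose_of_trivial] using
      Matrix.isHermitian_conjTranspose_mul_self M).eigenvalues i)

/-- The hybrid norm `‖M‖_{♯(ρ)} = max{ρ‖M‖_{1→1}, ρ⁻¹‖M‖_{∞→∞}}`. -/
def sharp {m n : ℕ} (ρ : ℝ) (M : Matrix (Fin m) (Fin n) ℝ) : ℝ :=
  max (ρ * n11 M) (ρ⁻¹ * nII M)

/-- The dual norm `‖·‖_{♭(ρ)}` of `‖·‖_{♯(ρ)}`. -/
def flat {m n : ℕ} (ρ : ℝ) (M : Matrix (Fin m) (Fin n) ℝ) : ℝ :=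
  sSup {x : ℝ | ∃ N : Matrix (Fin m) (Fin n) ℝ, sharp ρ N ≤ 1 ∧ x = inner' M N}

/-- Induced operator norm of a map `T` with respect to the norm `f`. -/
def opNormWrt {m n : ℕ} (f : Matrix (Fin m) (Fin n) ℝ → ℝ)
    (T : Matrix (Fin m) (Fin n) ℝ → Matrix (Fin m) (Fin n) ℝ) : ℝ :=
  sSup {x : ℝ | ∃ M, f M ≤ 1 ∧ x = f (T M)}

/-- Entrywise sign matrix. -/
def signM {m n : ℕ} (M : Matrix (Fin m) (Fin n) ℝ) : Matrix (Fin m) (Fin n) ℝ :=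
  Matrix.of fun i j => Real.sign (M i j)

/-- Orthogonal projection onto matrices supported on `supp X`. -/
def POmega {m n : ℕ} (X : Matrix (Fin m) (Fin n) ℝ) (M : Matrix (Fin m) (Fin n) ℝ) :
    Matrix (Fin m) (Fin n) ℝ :=
  Matrix.of fun i j => if X i j ≠ 0 then M i j else 0

/-- Orthogonal projection onto the tangent space `T` determined by `U`, `V`. -/
def PT {m n r : ℕ} (U : Matrix (Fin m) (Fin r) ℝ) (V : Matrix (Fin n) (Fin r) ℝ)
    (M : Matrix (Fin m) (Fin n) ℝ) : Matrix (Fin m) (Fin n) ℝ :=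
  U * Uᵀ * M + M * (V * Vᵀ) - U * Uᵀ * M * (V * Vᵀ)

/-- `‖U‖_{2→∞}`: maximum row Euclidean norm. -/
def two2inf {m r : ℕ} (U : Matrix (Fin m) (Fin r) ℝ) : ℝ :=
  ⨆ i, Real.sqrt (∑ k, (U i k) ^ 2)

/-- The sparsity measure `α(ρ)` of `X̄_S`. -/
def alpha {m n : ℕ} (X : Matrix (Fin m) (Fin n) ℝ) (ρ : ℝ) : ℝ :=
  max (ρ * n11 (signM X)) (ρ⁻¹ * nII (signM X))

/-- The incoherence measure `β(ρ)` of the singular vectors `U`, `V`. -/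
def beta {m n r : ℕ} (U : Matrix (Fin m) (Fin r) ℝ) (V : Matrix (Fin n) (Fin r) ℝ)
    (ρ : ℝ) : ℝ :=
  ρ⁻¹ * linf (U * Uᵀ) + ρ * linf (V * Vᵀ) + two2inf U * two2inf V

/-- Number of nonzero entries. -/
def suppCard {m n : ℕ} (X : Matrix (Fin m) (Fin n) ℝ) : ℕ :=
  (Finset.univ.filter fun p : Fin m × Fin n => X p.1 p.2 ≠ 0).card

lemma linf_nonneg {m n : ℕ} (M : Matrix (Fin m) (Fin n) ℝ) : 0 ≤ linf M :=
  Real.iSup_nonneg fun _ => Real.iSup_nonneg fun _ => abs_nonneg _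

lemma abs_le_linf {m n : ℕ} (M : Matrix (Fin m) (Fin n) ℝ) (i : Fin m) (j : Fin n) :
    |M i j| ≤ linf M := by
  have h1 : |M i j| ≤ ⨆ j, |M i j| :=
    le_ciSup (f := fun j => |M i j|) (Set.Finite.bddAbove (Set.finite_range _)) j
  exact h1.trans (le_ciSup (f := fun i => ⨆ j, |M i j|)
    (Set.Finite.bddAbove (Set.finite_range _)) i)

lemma n11_nonneg {m n : ℕ} (M : Matrix (Fin m) (Fin n) ℝ) : 0 ≤ n11 M :=
  Real.iSup_nonneg fun _ => Finset.sum_nonneg fun _ _ => abs_nonneg _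

lemma nII_nonneg {m n : ℕ} (M : Matrix (Fin m) (Fin n) ℝ) : 0 ≤ nII M :=
  Real.iSup_nonneg fun _ => Finset.sum_nonneg fun _ _ => abs_nonneg _

lemma col_sum_le_n11 {m n : ℕ} (M : Matrix (Fin m) (Fin n) ℝ) (j : Fin n) :
    ∑ i, |M i j| ≤ n11 M :=
  le_ciSup (f := fun j => ∑ i, |M i j|) (Set.Finite.bddAbove (Set.finite_range _)) j

lemma row_sum_le_nII {m n : ℕ} (M : Matrix (Fin m) (Fin n) ℝ) (i : Fin m) :
    ∑ j, |M i j| ≤ nII M :=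
  le_ciSup (f := fun i => ∑ j, |M i j|) (Set.Finite.bddAbove (Set.finite_range _)) i

lemma sharp_nonneg {m n : ℕ} {ρ : ℝ} (hρ : 0 < ρ) (M : Matrix (Fin m) (Fin n) ℝ) :
    0 ≤ sharp ρ M :=
  le_trans (mul_nonneg hρ.le (n11_nonneg M)) (le_max_left _ _)

lemma two2inf_nonneg {m r : ℕ} (U : Matrix (Fin m) (Fin r) ℝ) : 0 ≤ two2inf U :=
  Real.iSup_nonneg fun _ => Real.sqrt_nonneg _

lemma alpha_nonneg {m n : ℕ} (X : Matrix (Fin m) (Fin n) ℝ) {ρ : ℝ} (hρ : 0 < ρ) :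
    0 ≤ alpha X ρ :=
  le_trans (mul_nonneg hρ.le (n11_nonneg _)) (le_max_left _ _)

lemma beta_nonneg {m n r : ℕ} (U : Matrix (Fin m) (Fin r) ℝ) (V : Matrix (Fin n) (Fin r) ℝ)
    {ρ : ℝ} (hρ : 0 < ρ) : 0 ≤ beta U V ρ := by
  have h1 := linf_nonneg (U * Uᵀ)
  have h2 := linf_nonneg (V * Vᵀ)
  have h3 := two2inf_nonneg U
  have h4 := two2inf_nonneg V
  have h5 : 0 ≤ ρ⁻¹ := inv_nonneg.mpr hρ.le
  unfold beta
  positivity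

lemma step1 {m n : ℕ} (Xs M : Matrix (Fin m) (Fin n) ℝ) {ρ : ℝ} (hρ : 0 < ρ) :
    sharp ρ (POmega Xs M) ≤ alpha Xs ρ * linf M := by
  have hentry : ∀ i j, |POmega Xs M i j| ≤ |signM Xs i j| * linf M := by
    intro i j
    by_cases h : Xs i j ≠ 0
    · have h1 : POmega Xs M i j = M i j := by simp [POmega, h]
      have h2 : |signM Xs i j| = 1 := by
        rcases lt_trichotomy (Xs i j) 0 with hlt | heq | hgt
        · simp [signM, Real.sign_of_neg hlt]
        · exact absurd heq h
        · simp [signM, Real.sign_of_pos hgt]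
      rw [h1, h2, one_mul]; exact abs_le_linf M i j
    · push_neg at h
      have h1 : POmega Xs M i j = 0 := by simp [POmega, h]
      have h2 : signM Xs i j = 0 := by simp [signM, h, Real.sign_zero]
      simp [h1, h2]
  have hcol : ∀ j, ∑ i, |POmega Xs M i j| ≤ n11 (signM Xs) * linf M := by
    intro j
    calc ∑ i, |POmega Xs M i j| ≤ ∑ i, |signM Xs i j| * linf M :=
          Finset.sum_le_sum fun i _ => hentry i j
      _ = (∑ i, |signM Xs i j|) * linf M := by rw [Finset.sum_mul]
      _ ≤ n11 (signM Xs) * linf M :=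
          mul_le_mul_of_nonneg_right (col_sum_le_n11 _ j) (linf_nonneg M)
  have hrow : ∀ i, ∑ j, |POmega Xs M i j| ≤ nII (signM Xs) * linf M := by
    intro i
    calc ∑ j, |POmega Xs M i j| ≤ ∑ j, |signM Xs i j| * linf M :=
          Finset.sum_le_sum fun j _ => hentry i j
      _ = (∑ j, |signM Xs i j|) * linf M := by rw [Finset.sum_mul]
      _ ≤ nII (signM Xs) * linf M :=
          mul_le_mul_of_nonneg_right (row_sum_le_nII _ i) (linf_nonneg M)
  have hn11 : n11 (POmega Xs M) ≤ n11 (signM Xs) * linf M :=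
    Real.iSup_le hcol (mul_nonneg (n11_nonneg _) (linf_nonneg M))
  have hnII : nII (POmega Xs M) ≤ nII (signM Xs) * linf M :=
    Real.iSup_le hrow (mul_nonneg (nII_nonneg _) (linf_nonneg M))
  have hα := alpha_nonneg Xs hρ
  have hρi : 0 ≤ ρ⁻¹ := inv_nonneg.mpr hρ.le
  apply max_le
  · calc ρ * n11 (POmega Xs M) ≤ ρ * (n11 (signM Xs) * linf M) :=
        mul_le_mul_of_nonneg_left hn11 hρ.le
      _ = (ρ * n11 (signM Xs)) * linf M := by ring
      _ ≤ alpha Xs ρ * linf M :=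
        mul_le_mul_of_nonneg_right (le_max_left _ _) (linf_nonneg M)
  · calc ρ⁻¹ * nII (POmega Xs M) ≤ ρ⁻¹ * (nII (signM Xs) * linf M) :=
        mul_le_mul_of_nonneg_left hnII hρi
      _ = (ρ⁻¹ * nII (signM Xs)) * linf M := by ring
      _ ≤ alpha Xs ρ * linf M :=
        mul_le_mul_of_nonneg_right (le_max_right _ _) (linf_nonneg M)

lemma cs_bound {m n : ℕ} (x : Fin m → ℝ) (y : Fin n → ℝ) (N : Matrix (Fin m) (Fin n) ℝ) :
    |∑ k, ∑ l, x k * N k l * y l| ≤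
      Real.sqrt (∑ k, (x k) ^ 2) * Real.sqrt (∑ l, (y l) ^ 2) *
        Real.sqrt (n11 N * nII N) := by
  set S : ℝ := ∑ k, ∑ l, |x k| * |N k l| * |y l| with hS
  have hSnn : 0 ≤ S :=
    Finset.sum_nonneg fun _ _ => Finset.sum_nonneg fun _ _ => by positivity
  have habs : |∑ k, ∑ l, x k * N k l * y l| ≤ S := by
    calc |∑ k, ∑ l, x k * N k l * y l| ≤ ∑ k, |∑ l, x k * N k l * y l| :=
        Finset.abs_sum_le_sum_abs _ _
      _ ≤ S := Finset.sum_le_sum fun k _ => by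
          calc |∑ l, x k * N k l * y l| ≤ ∑ l, |x k * N k l * y l| :=
              Finset.abs_sum_le_sum_abs _ _
            _ = ∑ l, |x k| * |N k l| * |y l| := by simp [abs_mul]
  -- Cauchy–Schwarz on the product index
  have hsq : S ^ 2 ≤ (∑ k, (x k) ^ 2 * ∑ l, |N k l|) * (∑ l, (∑ k, |N k l|) * (y l) ^ 2) := by
    have hprod : S = ∑ p : Fin m × Fin n,
        (|x p.1| * Real.sqrt |N p.1 p.2|) * (Real.sqrt |N p.1 p.2| * |y p.2|) := by
      rw [hS, ← Finset.sum_product']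
      apply Finset.sum_congr rfl
      intro p _
      have : Real.sqrt |N p.1 p.2| * Real.sqrt |N p.1 p.2| = |N p.1 p.2| :=
        Real.mul_self_sqrt (abs_nonneg _)
      conv_lhs => rw [← this]
      ring
    rw [hprod]
    calc (∑ p : Fin m × Fin n,
          (|x p.1| * Real.sqrt |N p.1 p.2|) * (Real.sqrt |N p.1 p.2| * |y p.2|)) ^ 2
        ≤ (∑ p : Fin m × Fin n, (|x p.1| * Real.sqrt |N p.1 p.2|) ^ 2) *
          (∑ p : Fin m × Fin n, (Real.sqrt |N p.1 p.2| * |y p.2|) ^ 2) :=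
        Finset.sum_mul_sq_le_sq_mul_sq _ _ _
      _ = (∑ k, (x k) ^ 2 * ∑ l, |N k l|) * (∑ l, (∑ k, |N k l|) * (y l) ^ 2) := by
        congr 1
        · rw [← Finset.univ_product_univ, Finset.sum_product]
          refine Finset.sum_congr rfl fun k _ => ?_
          rw [Finset.mul_sum]
          refine Finset.sum_congr rfl fun l _ => ?_
          rw [mul_pow, Real.sq_sqrt (abs_nonneg _), sq_abs]
        · rw [← Finset.univ_product_univ, Finset.sum_product, Finset.sum_comm]
          refine Finset.sum_congr rfl fun l _ => ?_
          rw [Finset.sum_mul]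
          refine Finset.sum_congr rfl fun k _ => ?_
          rw [mul_pow, Real.sq_sqrt (abs_nonneg _), sq_abs]
  have h1 : (∑ k, (x k) ^ 2 * ∑ l, |N k l|) ≤ (∑ k, (x k) ^ 2) * nII N := by
    rw [Finset.sum_mul]
    exact Finset.sum_le_sum fun k _ =>
      mul_le_mul_of_nonneg_left (row_sum_le_nII N k) (sq_nonneg _)
  have h2 : (∑ l, (∑ k, |N k l|) * (y l) ^ 2) ≤ n11 N * (∑ l, (y l) ^ 2) := by
    rw [Finset.mul_sum]
    exact Finset.sum_le_sum fun l _ =>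
      mul_le_mul_of_nonneg_right (col_sum_le_n11 N l) (sq_nonneg _)
  have hx : 0 ≤ ∑ k, (x k) ^ 2 := Finset.sum_nonneg fun _ _ => sq_nonneg _
  have hy : 0 ≤ ∑ l, (y l) ^ 2 := Finset.sum_nonneg fun _ _ => sq_nonneg _
  have hfin : S ^ 2 ≤ (∑ k, (x k) ^ 2) * (∑ l, (y l) ^ 2) * (n11 N * nII N) := by
    have hA : 0 ≤ ∑ k, (x k) ^ 2 * ∑ l, |N k l| :=
      Finset.sum_nonneg fun _ _ => mul_nonneg (sq_nonneg _)
        (Finset.sum_nonneg fun _ _ => abs_nonneg _)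
    have := mul_le_mul h1 h2 (Finset.sum_nonneg fun _ _ =>
      mul_nonneg (Finset.sum_nonneg fun _ _ => abs_nonneg _) (sq_nonneg _))
      (mul_nonneg hx (nII_nonneg N))
    nlinarith [this, hsq]
  have hSle : S ≤ Real.sqrt ((∑ k, (x k) ^ 2) * (∑ l, (y l) ^ 2) * (n11 N * nII N)) :=
    Real.le_sqrt_of_sq_le hfin
  calc |∑ k, ∑ l, x k * N k l * y l| ≤ S := habs
    _ ≤ Real.sqrt ((∑ k, (x k) ^ 2) * (∑ l, (y l) ^ 2) * (n11 N * nII N)) := hSle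
    _ = Real.sqrt (∑ k, (x k) ^ 2) * Real.sqrt (∑ l, (y l) ^ 2) *
        Real.sqrt (n11 N * nII N) := by
      rw [Real.sqrt_mul (by positivity), Real.sqrt_mul hx]

lemma rowsq_eq {m r : ℕ} (U : Matrix (Fin m) (Fin r) ℝ) (hU : Uᵀ * U = 1) (i : Fin m) :
    ∑ k, ((U * Uᵀ) i k) ^ 2 = ∑ s, (U i s) ^ 2 := by
  have hsymm : ∀ a b, (U * Uᵀ) a b = (U * Uᵀ) b a := by
    intro a b
    have : (U * Uᵀ)ᵀ = U * Uᵀ := by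
      rw [Matrix.transpose_mul, Matrix.transpose_transpose]
    calc (U * Uᵀ) a b = (U * Uᵀ)ᵀ b a := rfl
      _ = (U * Uᵀ) b a := by rw [this]
  have hidem : (U * Uᵀ) * (U * Uᵀ) = U * Uᵀ := by
    rw [Matrix.mul_assoc U Uᵀ (U * Uᵀ), ← Matrix.mul_assoc Uᵀ U Uᵀ, hU, Matrix.one_mul]
  calc ∑ k, ((U * Uᵀ) i k) ^ 2
      = ∑ k, (U * Uᵀ) i k * (U * Uᵀ) k i :=
        Finset.sum_congr rfl fun k _ => by rw [sq, hsymm i k]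
    _ = ((U * Uᵀ) * (U * Uᵀ)) i i := by rw [Matrix.mul_apply]
    _ = (U * Uᵀ) i i := by rw [hidem]
    _ = ∑ s, (U i s) ^ 2 := by
        rw [Matrix.mul_apply]
        exact Finset.sum_congr rfl fun s _ => by simp [Matrix.transpose_apply, sq]

lemma sqrt_rowsq_le {m r : ℕ} (U : Matrix (Fin m) (Fin r) ℝ) (i : Fin m) :
    Real.sqrt (∑ s, (U i s) ^ 2) ≤ two2inf U :=
  le_ciSup (f := fun i => Real.sqrt (∑ s, (U i s) ^ 2))
    (Set.Finite.bddAbove (Set.finite_range _)) i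

lemma step2 {m n r : ℕ} (U : Matrix (Fin m) (Fin r) ℝ) (V : Matrix (Fin n) (Fin r) ℝ)
    (hU : Uᵀ * U = 1) (hV : Vᵀ * V = 1) {ρ : ℝ} (hρ : 0 < ρ)
    (N : Matrix (Fin m) (Fin n) ℝ) :
    linf (PT U V N) ≤ beta U V ρ * sharp ρ N := by
  set s := sharp ρ N with hs
  have hsnn : 0 ≤ s := sharp_nonneg hρ N
  have hβnn := beta_nonneg U V hρ
  have hn11 : n11 N ≤ ρ⁻¹ * s := by
    have h : ρ * n11 N ≤ s := le_max_left (ρ * n11 N) (ρ⁻¹ * nII N)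
    calc n11 N = ρ⁻¹ * (ρ * n11 N) := by field_simp
      _ ≤ ρ⁻¹ * s := mul_le_mul_of_nonneg_left h (inv_nonneg.mpr hρ.le)
  have hnII : nII N ≤ ρ * s := by
    have h : ρ⁻¹ * nII N ≤ s := le_max_right (ρ * n11 N) (ρ⁻¹ * nII N)
    calc nII N = ρ * (ρ⁻¹ * nII N) := by field_simp
      _ ≤ ρ * s := mul_le_mul_of_nonneg_left h hρ.le
  apply Real.iSup_le _ (mul_nonneg hβnn hsnn)
  intro i
  apply Real.iSup_le _ (mul_nonneg hβnn hsnn)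
  intro j
  -- split the entry into three pieces
  have hsplit : |PT U V N i j| ≤
      |(U * Uᵀ * N) i j| + |(N * (V * Vᵀ)) i j| + |(U * Uᵀ * N * (V * Vᵀ)) i j| := by
    have : PT U V N i j = (U * Uᵀ * N) i j + (N * (V * Vᵀ)) i j
        - (U * Uᵀ * N * (V * Vᵀ)) i j := by
      simp [PT, Matrix.sub_apply, Matrix.add_apply]
    rw [this]
    calc |(U * Uᵀ * N) i j + (N * (V * Vᵀ)) i j - (U * Uᵀ * N * (V * Vᵀ)) i j|
        ≤ |(U * Uᵀ * N) i j + (N * (V * Vᵀ)) i j| + |(U * Uᵀ * N * (V * Vᵀ)) i j| :=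
        abs_sub _ _
      _ ≤ |(U * Uᵀ * N) i j| + |(N * (V * Vᵀ)) i j| + |(U * Uᵀ * N * (V * Vᵀ)) i j| := by
        have := abs_add_le ((U * Uᵀ * N) i j) ((N * (V * Vᵀ)) i j)
        linarith
  -- term 1
  have ht1 : |(U * Uᵀ * N) i j| ≤ ρ⁻¹ * linf (U * Uᵀ) * s := by
    have hL := linf_nonneg (U * Uᵀ)
    calc |(U * Uᵀ * N) i j| = |∑ k, (U * Uᵀ) i k * N k j| := by rw [Matrix.mul_apply]
      _ ≤ ∑ k, |(U * Uᵀ) i k * N k j| := Finset.abs_sum_le_sum_abs _ _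
      _ ≤ ∑ k, linf (U * Uᵀ) * |N k j| := Finset.sum_le_sum fun k _ => by
          rw [abs_mul]
          exact mul_le_mul_of_nonneg_right (abs_le_linf _ i k) (abs_nonneg _)
      _ = linf (U * Uᵀ) * ∑ k, |N k j| := by rw [Finset.mul_sum]
      _ ≤ linf (U * Uᵀ) * n11 N := mul_le_mul_of_nonneg_left (col_sum_le_n11 N j) hL
      _ ≤ linf (U * Uᵀ) * (ρ⁻¹ * s) := mul_le_mul_of_nonneg_left hn11 hL
      _ = ρ⁻¹ * linf (U * Uᵀ) * s := by ring
  -- term 2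
  have ht2 : |(N * (V * Vᵀ)) i j| ≤ ρ * linf (V * Vᵀ) * s := by
    have hL := linf_nonneg (V * Vᵀ)
    calc |(N * (V * Vᵀ)) i j| = |∑ l, N i l * (V * Vᵀ) l j| := by rw [Matrix.mul_apply]
      _ ≤ ∑ l, |N i l * (V * Vᵀ) l j| := Finset.abs_sum_le_sum_abs _ _
      _ ≤ ∑ l, |N i l| * linf (V * Vᵀ) := Finset.sum_le_sum fun l _ => by
          rw [abs_mul]
          exact mul_le_mul_of_nonneg_left (abs_le_linf _ l j) (abs_nonneg _)
      _ = (∑ l, |N i l|) * linf (V * Vᵀ) := by rw [Finset.sum_mul]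
      _ ≤ nII N * linf (V * Vᵀ) := mul_le_mul_of_nonneg_right (row_sum_le_nII N i) hL
      _ ≤ (ρ * s) * linf (V * Vᵀ) := mul_le_mul_of_nonneg_right hnII hL
      _ = ρ * linf (V * Vᵀ) * s := by ring
  -- term 3
  have ht3 : |(U * Uᵀ * N * (V * Vᵀ)) i j| ≤ two2inf U * two2inf V * s := by
    have hVsymm : ∀ a b, (V * Vᵀ) a b = (V * Vᵀ) b a := by
      intro a b
      have h : (V * Vᵀ)ᵀ = V * Vᵀ := by
        rw [Matrix.transpose_mul, Matrix.transpose_transpose]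
      calc (V * Vᵀ) a b = (V * Vᵀ)ᵀ b a := rfl
        _ = (V * Vᵀ) b a := by rw [h]
    have hentry : (U * Uᵀ * N * (V * Vᵀ)) i j =
        ∑ k, ∑ l, (U * Uᵀ) i k * N k l * (V * Vᵀ) l j := by
      rw [Matrix.mul_apply]
      rw [Finset.sum_comm]
      apply Finset.sum_congr rfl
      intro l _
      rw [Matrix.mul_apply, Finset.sum_mul]
    rw [hentry]
    have hcs := cs_bound (fun k => (U * Uᵀ) i k) (fun l => (V * Vᵀ) l j) N
    have hxu : Real.sqrt (∑ k, ((U * Uᵀ) i k) ^ 2) ≤ two2inf U := by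
      rw [rowsq_eq U hU i]; exact sqrt_rowsq_le U i
    have hyv : Real.sqrt (∑ l, ((V * Vᵀ) l j) ^ 2) ≤ two2inf V := by
      have : ∑ l, ((V * Vᵀ) l j) ^ 2 = ∑ l, ((V * Vᵀ) j l) ^ 2 := by
        apply Finset.sum_congr rfl; intro l _; rw [hVsymm l j]
      rw [this, rowsq_eq V hV j]; exact sqrt_rowsq_le V j
    have hsn : Real.sqrt (n11 N * nII N) ≤ s := by
      have hprod : n11 N * nII N ≤ s ^ 2 := by
        have := mul_le_mul hn11 hnII (nII_nonneg N)
          (mul_nonneg (inv_nonneg.mpr hρ.le) hsnn)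
        calc n11 N * nII N ≤ (ρ⁻¹ * s) * (ρ * s) := this
          _ = s ^ 2 := by field_simp
      calc Real.sqrt (n11 N * nII N) ≤ Real.sqrt (s ^ 2) := Real.sqrt_le_sqrt hprod
        _ = s := Real.sqrt_sq hsnn
    calc |∑ k, ∑ l, (U * Uᵀ) i k * N k l * (V * Vᵀ) l j|
        ≤ Real.sqrt (∑ k, ((U * Uᵀ) i k) ^ 2) * Real.sqrt (∑ l, ((V * Vᵀ) l j) ^ 2) *
          Real.sqrt (n11 N * nII N) := hcs
      _ ≤ two2inf U * two2inf V * s := by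
        apply mul_le_mul
        · exact mul_le_mul hxu hyv (Real.sqrt_nonneg _) (two2inf_nonneg U)
        · exact hsn
        · exact Real.sqrt_nonneg _
        · exact mul_nonneg (two2inf_nonneg U) (two2inf_nonneg V)
  calc |PT U V N i j| ≤ |(U * Uᵀ * N) i j| + |(N * (V * Vᵀ)) i j|
        + |(U * Uᵀ * N * (V * Vᵀ)) i j| := hsplit
    _ ≤ ρ⁻¹ * linf (U * Uᵀ) * s + ρ * linf (V * Vᵀ) * s + two2inf U * two2inf V * s := by
        linarith
    _ = beta U V ρ * s := by rw [beta]; ring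

/-- `‖P_T ∘ P_Ω‖_{ℓ∞→ℓ∞} ≤ α(ρ)β(ρ)`. -/
theorem PT_comp_POmega_linf_opNorm {m n r : ℕ} (Xs : Matrix (Fin m) (Fin n) ℝ)
    (U : Matrix (Fin m) (Fin r) ℝ) (V : Matrix (Fin n) (Fin r) ℝ)
    (hU : Uᵀ * U = 1) (hV : Vᵀ * V = 1) (ρ : ℝ) (hρ : 0 < ρ) :
    opNormWrt linf (fun M => PT U V (POmega Xs M)) ≤ alpha Xs ρ * beta U V ρ := by
  apply Real.sSup_le
  · rintro x ⟨M, hM, rfl⟩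
    have h2 := step2 U V hU hV hρ (POmega Xs M)
    have h1 := step1 Xs M hρ
    have hβ := beta_nonneg U V hρ
    have hα := alpha_nonneg Xs hρ
    calc linf (PT U V (POmega Xs M)) ≤ beta U V ρ * sharp ρ (POmega Xs M) := h2
      _ ≤ beta U V ρ * (alpha Xs ρ * linf M) := mul_le_mul_of_nonneg_left h1 hβ
      _ ≤ beta U V ρ * (alpha Xs ρ * 1) := by
          apply mul_le_mul_of_nonneg_left _ hβ
          exact mul_le_mul_of_nonneg_left hM hα
      _ = alpha Xs ρ * beta U V ρ := by ring
  · exact mul_nonneg (alpha_nonneg Xs hρ) (beta_nonneg U V hρ)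


end SLR
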